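/- For an interval graph G and any k ≥ 1, the k-th power G^{*k} is a perfect graph. -/

import Mathlib

variable {V : Type*} [Fintype V] [DecidableEq V]

/-- `G` is an interval graph: the intersection graph of a family of
closed intervals on the real line. -/
def IsIntervalGraph (G : SimpleGraph V) : Prop :=
  ∃ f : V → ℝ × ℝ, (∀ v, (f v).1 ≤ (f v).2) ∧
    ∀ x y, x ≠ y →
      (G.Adj x y ↔ (Set.Icc (f x).1 (f x).2 ∩ Set.Icc (f y).1 (f y).2).Nonempty)

/-- The `k`-th power of `G`: distinct vertices adjacent iff at distance at most `k`. -/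
def powerGraph (G : SimpleGraph V) (k : ℕ) : SimpleGraph V where
  Adj x y := x ≠ y ∧ G.Reachable x y ∧ G.dist x y ≤ k
  symm := by
    constructor
    rintro x y ⟨h1, h2, h3⟩
    exact ⟨h1.symm, h2.symm, by rwa [SimpleGraph.dist_comm]⟩
  loopless := by constructor; rintro x ⟨h1, -⟩; exact h1 rfl

/-- A graph is perfect if every induced subgraph has chromatic number equal to
its clique number. -/
def IsPerfect {W : Type*} (G : SimpleGraph W) : Prop :=
  ∀ S : Set W, (G.induce S).chromaticNumber = ((G.induce S).cliqueNum : ℕ∞)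

open SimpleGraph

/-- An interval model for `H`, in endpoint form. -/
def IntervalModel {W : Type*} (H : SimpleGraph W) (f : W → ℝ × ℝ) : Prop :=
  (∀ v, (f v).1 ≤ (f v).2) ∧
    ∀ x y, x ≠ y → (H.Adj x y ↔ (f y).1 ≤ (f x).2 ∧ (f x).1 ≤ (f y).2)

lemma intervalModel_of_isIntervalGraph {W : Type*} {H : SimpleGraph W}
    (h : ∃ f : W → ℝ × ℝ, (∀ v, (f v).1 ≤ (f v).2) ∧
      ∀ x y, x ≠ y →
        (H.Adj x y ↔ (Set.Icc (f x).1 (f x).2 ∩ Set.Icc (f y).1 (f y).2).Nonempty)) :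
    ∃ f, IntervalModel H f := by
  obtain ⟨f, hf1, hf2⟩ := h
  refine ⟨f, hf1, fun x y hxy => ?_⟩
  rw [hf2 x y hxy, Set.Icc_inter_Icc, Set.nonempty_Icc, sup_le_iff, le_inf_iff, le_inf_iff]
  constructor
  · rintro ⟨⟨-, h1⟩, h2, -⟩; exact ⟨h2, h1⟩
  · rintro ⟨h1, h2⟩; exact ⟨⟨hf1 x, h2⟩, h1, hf1 y⟩

/-- Along a walk, the intervals sweep out a connected set: any point between the left
endpoint of the start and the right endpoint of the end is in some interval on the walk. -/
lemma walk_covers {W : Type*} {H : SimpleGraph W} {f : W → ℝ × ℝ}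
    (hf : IntervalModel H f) :
    ∀ {x u : W} (p : H.Walk x u) (t : ℝ), (f x).1 ≤ t → t ≤ (f u).2 →
      ∃ w, (f w).1 ≤ t ∧ t ≤ (f w).2 ∧ ∃ q : H.Walk x w, q.length ≤ p.length := by
  intro x u p
  induction p with
  | nil => exact fun t h1 h2 => ⟨_, h1, h2, SimpleGraph.Walk.nil, le_refl _⟩
  | @cons x z u h q ih =>
    intro t h1 h2
    by_cases hx : t ≤ (f x).2
    · exact ⟨x, h1, hx, SimpleGraph.Walk.nil, Nat.zero_le _⟩
    · push_neg at hx
      have hadj := (hf.2 x z h.ne).mp h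
      have hz1 : (f z).1 ≤ t := le_of_lt (lt_of_le_of_lt hadj.1 hx)
      obtain ⟨w, hw1, hw2, r, hr⟩ := ih t hz1 h2
      exact ⟨w, hw1, hw2, SimpleGraph.Walk.cons h r, by simpa using Nat.succ_le_succ hr⟩

open Classical in
lemma power_model {G : SimpleGraph V} {f : V → ℝ × ℝ} (hf : IntervalModel G f)
    {k : ℕ} (hk : 1 ≤ k) : ∃ g, IntervalModel (powerGraph G k) g := by
  classical
  -- the ball of radius k-1 around v
  set Ball : V → Finset V :=
    fun v => Finset.univ.filter (fun u => G.Reachable v u ∧ G.dist v u ≤ k - 1) with hBall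
  have hmem : ∀ v, v ∈ Ball v := by
    intro v
    simp [hBall, SimpleGraph.Reachable.refl, SimpleGraph.dist_self]
  have hne : ∀ v, (Ball v).Nonempty := fun v => ⟨v, hmem v⟩
  set B : V → ℝ := fun v => (Ball v).sup' (hne v) (fun u => (f u).2) with hB
  have hle : ∀ v, (f v).1 ≤ B v := fun v =>
    (hf.1 v).trans (Finset.le_sup' (fun u => (f u).2) (hmem v))
  -- forward helper
  have fwd : ∀ x y, (powerGraph G k).Adj x y → (f y).1 ≤ B x := by
    rintro x y ⟨hxy, hr, hd⟩
    have hd0 : G.dist y x ≠ 0 := by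
      rw [SimpleGraph.dist_ne_zero_iff_ne_and_reachable]
      exact ⟨hxy.symm, hr.symm⟩
    obtain ⟨p, hp⟩ := hr.symm.exists_walk_length_eq_dist
    cases p with
    | nil => simp [SimpleGraph.dist_self] at hd0
    | @cons y z x h q =>
      have hadj := (hf.2 y z h.ne).mp h
      have hzmem : z ∈ Ball x := by
        simp only [hBall, Finset.mem_filter, Finset.mem_univ, true_and]
        constructor
        · exact SimpleGraph.Reachable.symm ⟨q⟩
        · calc G.dist x z ≤ q.reverse.length := SimpleGraph.dist_le _
            _ = q.length := q.length_reverse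
            _ ≤ k - 1 := by
              have : q.length + 1 = G.dist y x := by simpa using hp
              have : G.dist y x ≤ k := by rwa [SimpleGraph.dist_comm]
              omega
      exact hadj.2.trans (Finset.le_sup' (fun u => (f u).2) hzmem)
  -- backward helper (assuming left endpoint of x is ≤ that of y)
  have bwd : ∀ x y, x ≠ y → (f x).1 ≤ (f y).1 → (f y).1 ≤ B x →
      G.Reachable x y ∧ G.dist x y ≤ k := by
    intro x y hxy hxy1 hyB
    obtain ⟨u, hu, hBu⟩ := Finset.exists_mem_eq_sup' (hne x) (fun u => (f u).2)
    simp only [hBall, Finset.mem_filter, Finset.mem_univ, true_and] at hu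
    obtain ⟨hru, hdu⟩ := hu
    have hyu : (f y).1 ≤ (f u).2 := by rw [← hBu]; exact hyB
    obtain ⟨p, hp⟩ := hru.exists_walk_length_eq_dist
    by_cases hcase : (f u).1 ≤ (f y).2
    · -- u's interval meets y's interval
      by_cases huy : u = y
      · subst huy
        exact ⟨hru, le_trans hdu (by omega)⟩
      · have hadj : G.Adj u y := (hf.2 u y huy).mpr ⟨hyu, hcase⟩
        refine ⟨hru.trans hadj.reachable, ?_⟩
        calc G.dist x y ≤ (p.concat hadj).length := SimpleGraph.dist_le _
          _ = p.length + 1 := p.length_concat hadj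
          _ ≤ k := by omega
    · -- u's interval is strictly to the right of y's; the walk must cross y's interval
      push_neg at hcase
      have hx2 : (f x).1 ≤ (f y).2 := hxy1.trans (hf.1 y)
      have hu2 : (f y).2 ≤ (f u).2 := le_of_lt (lt_of_lt_of_le hcase (hf.1 u))
      obtain ⟨w, hw1, hw2, q, hq⟩ := walk_covers hf p ((f y).2) hx2 hu2
      by_cases hwy : w = y
      · have h1 : G.dist x w ≤ k :=
          calc G.dist x w ≤ q.length := SimpleGraph.dist_le _
            _ ≤ k := by omega
        have h2 : G.Reachable x w := ⟨q⟩
        rw [hwy] at h1 h2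
        exact ⟨h2, h1⟩
      · have hadj : G.Adj w y := (hf.2 w y hwy).mpr ⟨(hf.1 y).trans hw2, hw1⟩
        refine ⟨SimpleGraph.Reachable.trans ⟨q⟩ hadj.reachable, ?_⟩
        calc G.dist x y ≤ (q.concat hadj).length := SimpleGraph.dist_le _
          _ = q.length + 1 := q.length_concat hadj
          _ ≤ k := by omega
  refine ⟨fun v => ((f v).1, B v), fun v => hle v, fun x y hxy => ?_⟩
  constructor
  · intro h
    exact ⟨fwd x y h, fwd y x h.symm⟩
  · rintro ⟨h1, h2⟩
    rcases le_total (f x).1 (f y).1 with hle' | hle'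
    · obtain ⟨hr, hd⟩ := bwd x y hxy hle' h1
      exact ⟨hxy, hr, hd⟩
    · obtain ⟨hr, hd⟩ := bwd y x (Ne.symm hxy) hle' h2
      exact ⟨hxy, hr.symm, by rwa [SimpleGraph.dist_comm]⟩

universe u

lemma induce_model {W : Type u} {H : SimpleGraph W} {f : W → ℝ × ℝ}
    (hf : IntervalModel H f) (S : Set W) :
    IntervalModel (H.induce S) (fun w => f w.1) := by
  refine ⟨fun w => hf.1 w.1, fun x y hxy => ?_⟩
  have h : (x : W) ≠ y := fun h => hxy (Subtype.ext h)
  simpa using hf.2 x.1 y.1 h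

lemma cliqueNum_induce_le {W : Type u} [Fintype W] (H : SimpleGraph W) (S : Set W)
    [Fintype ↥S] : (H.induce S).cliqueNum ≤ H.cliqueNum := by
  classical
  obtain ⟨s, hs⟩ := (H.induce S).exists_isNClique_cliqueNum
  have hcl : H.IsClique (s.image Subtype.val) := by
    intro a ha b hb hab
    simp only [Finset.coe_image, Set.mem_image, Finset.mem_coe] at ha hb
    obtain ⟨a', ha', rfl⟩ := ha
    obtain ⟨b', hb', rfl⟩ := hb
    have hne : a' ≠ b' := fun h => hab (by rw [h])
    exact hs.isClique ha' hb' hne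
  calc (H.induce S).cliqueNum = (s.image Subtype.val).card := by
        rw [Finset.card_image_of_injective _ Subtype.val_injective, hs.card_eq]
    _ ≤ H.cliqueNum := hcl.card_le_cliqueNum

lemma colorable_of_model : ∀ (n : ℕ) {W : Type u} [Fintype W] [DecidableEq W]
    (H : SimpleGraph W) (f : W → ℝ × ℝ), IntervalModel H f → Fintype.card W = n →
    H.Colorable H.cliqueNum := by
  intro n
  induction n with
  | zero =>
    intro W _ _ H f hf hcard
    have := H.colorable_of_fintype
    rw [hcard] at this
    exact this.mono (Nat.zero_le _)
  | succ n ih =>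
    intro W _ _ H f hf hcard
    classical
    have hne : Nonempty W := Fintype.card_pos_iff.mp (by omega)
    obtain ⟨v, -, hv⟩ := Finset.exists_max_image (Finset.univ : Finset W)
      (fun w => (f w).1) ⟨Classical.arbitrary W, Finset.mem_univ _⟩
    have hv : ∀ u, (f u).1 ≤ (f v).1 := fun u => hv u (Finset.mem_univ u)
    set S : Set W := {w | w ≠ v} with hS
    have hcard' : Fintype.card ↥S = n := by
      have h1 : Fintype.card ↥S = Fintype.card {w // ¬ w = v} := Fintype.card_congr (Equiv.refl _)
      rw [h1, Fintype.card_subtype_compl, Fintype.card_subtype_eq, hcard]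
      omega
    have hcol : (H.induce S).Colorable (H.induce S).cliqueNum :=
      ih (H.induce S) _ (induce_model hf S) hcard'
    have hcol2 : (H.induce S).Colorable H.cliqueNum :=
      hcol.mono (cliqueNum_induce_le H S)
    -- the intervals of all neighbors of `v` contain the point `(f v).1`
    have hnbr : ∀ u, H.Adj v u → (f u).1 ≤ (f v).1 ∧ (f v).1 ≤ (f u).2 := fun u h =>
      ⟨hv u, ((hf.2 v u h.ne).mp h).2⟩
    set N : Finset W := Finset.univ.filter (fun u => H.Adj v u) with hN
    have hNmem : ∀ u, u ∈ N ↔ H.Adj v u := by simp [hN]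
    have hclique : H.IsClique (insert v N : Finset W) := by
      intro a ha b hb hab
      simp only [Finset.coe_insert, Set.mem_insert_iff, Finset.mem_coe, hNmem] at ha hb
      rcases ha with rfl | ha
      · rcases hb with rfl | hb
        · exact absurd rfl hab
        · exact hb
      · rcases hb with rfl | hb
        · exact ha.symm
        · exact (hf.2 a b hab).mpr
            ⟨(hnbr b hb).1.trans (hnbr a ha).2, (hnbr a ha).1.trans (hnbr b hb).2⟩
    have hNcard : N.card + 1 ≤ H.cliqueNum := by
      have hvN : v ∉ N := by simp [hNmem]
      have hle := hclique.card_le_cliqueNum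
      rwa [Finset.card_insert_of_notMem hvN] at hle
    obtain ⟨C⟩ := hcol2
    have hNS : ∀ u ∈ N, u ∈ S := fun u hu => ((hNmem u).mp hu).ne'
    set used : Finset (Fin H.cliqueNum) :=
      N.attach.image (fun u => C ⟨u.1, hNS u.1 u.2⟩) with hused
    have husedcard : used.card ≤ N.card := by
      calc used.card ≤ N.attach.card := Finset.card_image_le
        _ = N.card := Finset.card_attach
    have hfree : ∃ c, c ∉ used := by
      by_contra hcon
      push_neg at hcon
      have hsub : (Finset.univ : Finset (Fin H.cliqueNum)) ⊆ used := fun c _ => hcon c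
      have := Finset.card_le_card hsub
      simp only [Finset.card_univ, Fintype.card_fin] at this
      omega
    obtain ⟨c, hc⟩ := hfree
    refine ⟨SimpleGraph.Coloring.mk
      (fun w => if h : w = v then c else C ⟨w, h⟩) ?_⟩
    intro a b hab
    have hmemused : ∀ (b : W) (hb : b ∈ S), b ∈ N → C ⟨b, hb⟩ ∈ used := by
      intro b hb hbN
      rw [hused]
      exact Finset.mem_image.mpr ⟨⟨b, hbN⟩, Finset.mem_attach _ _, rfl⟩
    by_cases ha : a = v
    · have hb : b ≠ v := fun h => hab.ne (ha.trans h.symm)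
      have hbN : b ∈ N := (hNmem b).mpr (ha ▸ hab)
      simp only [dif_pos ha, dif_neg hb]
      exact fun h => hc (by rw [h]; exact hmemused b hb hbN)
    · by_cases hb : b = v
      · have haN : a ∈ N := (hNmem a).mpr (hb ▸ hab.symm)
        simp only [dif_neg ha, dif_pos hb]
        exact fun h => hc (by rw [← h]; exact hmemused a ha haN)
      · simp only [dif_neg ha, dif_neg hb]
        exact C.valid (by exact hab)

theorem stmt16 (G : SimpleGraph V) (hG : IsIntervalGraph G) (k : ℕ) (hk : 1 ≤ k) :
    IsPerfect (powerGraph G k) := by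
  intro S
  haveI : Fintype ↥S := Fintype.ofFinite _
  obtain ⟨f, hf⟩ := intervalModel_of_isIntervalGraph hG
  obtain ⟨g, hg⟩ := power_model hf hk
  have hcol := colorable_of_model (Fintype.card ↥S) ((powerGraph G k).induce S) _
    (induce_model hg S) rfl
  refine le_antisymm ?_ ?_
  · exact_mod_cast hcol.chromaticNumber_le
  · obtain ⟨s, hs⟩ := ((powerGraph G k).induce S).exists_isNClique_cliqueNum
    have hle := hs.isClique.card_le_chromaticNumber
    rwa [hs.card_eq] at hle
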